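/- Let 𝒳 be a finite set with |𝒳| = d ≥ 1, let P be a probability mass function on 𝒳, let ℓ ≥ 1, and let X₁, …, X_ℓ be independent random variables each distributed according to P. Let P̂(x) := (1/ℓ)·#{j ≤ ℓ : X_j = x} be the empirical distribution. Then for every ε > 0, the probability that ∑_{x ∈ 𝒳} |P(x) − P̂(x)| ≥ ε is at most 2^d · exp(−ℓ ε² / 2). -/

import Mathlib

open MeasureTheory ProbabilityTheory

open Real in

lemma hoeffding_bernoulli (p : ℝ) (hp0 : 0 ≤ p) (hp1 : p ≤ 1) (t : ℝ) :
    (1 - p) + p * Real.exp t ≤ Real.exp (p * t + t ^ 2 / 8) := by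
  have hD : ∀ s : ℝ, 0 < 1 - p + p * Real.exp s := by
    intro s
    rcases eq_or_lt_of_le hp0 with h | h
    · simp [← h]
    · have := mul_pos h (Real.exp_pos s)
      linarith
  set f : ℝ → ℝ := fun s => p * s + s ^ 2 / 8 - Real.log (1 - p + p * Real.exp s) with hf_def
  set g : ℝ → ℝ := fun s => p + s / 4 - p * Real.exp s / (1 - p + p * Real.exp s) with hg_def
  have hden : ∀ s : ℝ, HasDerivAt (fun u => 1 - p + p * Real.exp u) (p * Real.exp s) s :=
    fun s => ((Real.hasDerivAt_exp s).const_mul p).const_add (1 - p)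
  have hf : ∀ s : ℝ, HasDerivAt f (g s) s := by
    intro s
    have h2 : HasDerivAt (fun u => Real.log (1 - p + p * Real.exp u))
        (p * Real.exp s / (1 - p + p * Real.exp s)) s := (hden s).log (hD s).ne'
    have h3 : HasDerivAt (fun u : ℝ => p * u + u ^ 2 / 8) (p + s / 4) s := by
      have := ((hasDerivAt_id s).const_mul p).add ((hasDerivAt_pow 2 s).div_const 8)
      refine this.congr_deriv ?_
      push_cast
      ring
    have := h3.sub h2
    exact this
  have hg : ∀ s : ℝ, HasDerivAt g
      (1 / 4 - p * (1 - p) * Real.exp s / (1 - p + p * Real.exp s) ^ 2) s := by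
    intro s
    have hnum : HasDerivAt (fun u => p * Real.exp u) (p * Real.exp s) s :=
      (Real.hasDerivAt_exp s).const_mul p
    have hq := hnum.div (hden s) (hD s).ne'
    have hlin : HasDerivAt (fun u : ℝ => p + u / 4) (1 / 4) s := by
      simpa using ((hasDerivAt_id s).div_const 4).const_add p
    have := hlin.sub hq
    refine this.congr_deriv ?_
    field_simp
    ring
  have hgderiv_nonneg : ∀ s : ℝ,
      0 ≤ 1 / 4 - p * (1 - p) * Real.exp s / (1 - p + p * Real.exp s) ^ 2 := by
    intro s
    rw [sub_nonneg, div_le_iff₀ (pow_pos (hD s) 2)]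
    nlinarith [sq_nonneg (1 - p - p * Real.exp s), Real.exp_pos s]
  have hgmono : Monotone g :=
    monotone_of_deriv_nonneg (fun s => (hg s).differentiableAt)
      (fun s => by rw [(hg s).deriv]; exact hgderiv_nonneg s)
  have hg0 : g 0 = 0 := by
    simp [hg_def]
  have hf0 : f 0 = 0 := by
    simp [hf_def]
  have hfnonneg : 0 ≤ f t := by
    rcases le_total 0 t with ht | ht
    · have hmono : MonotoneOn f (Set.Ici 0) := by
        apply monotoneOn_of_deriv_nonneg (convex_Ici 0)
          (fun s _ => (hf s).differentiableAt.continuousAt.continuousWithinAt)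
          (fun s _ => (hf s).differentiableAt.differentiableWithinAt)
        intro s hs
        rw [(hf s).deriv]
        rw [interior_Ici] at hs
        have := hgmono (le_of_lt hs)
        rw [hg0] at this
        exact this
      have := hmono Set.self_mem_Ici ht ht
      rwa [hf0] at this
    · have hanti : AntitoneOn f (Set.Iic 0) := by
        apply antitoneOn_of_deriv_nonpos (convex_Iic 0)
          (fun s _ => (hf s).differentiableAt.continuousAt.continuousWithinAt)
          (fun s _ => (hf s).differentiableAt.differentiableWithinAt)
        intro s hs
        rw [(hf s).deriv]
        rw [interior_Iic] at hs
        have := hgmono (le_of_lt hs)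
        rw [hg0] at this
        exact this
      have := hanti ht Set.self_mem_Iic ht
      rwa [hf0] at this
  have hlog : Real.log (1 - p + p * Real.exp t) ≤ p * t + t ^ 2 / 8 := by
    have h : f t = p * t + t ^ 2 / 8 - Real.log (1 - p + p * Real.exp t) := rfl
    rw [h] at hfnonneg
    linarith
  calc (1 - p) + p * Real.exp t = Real.exp (Real.log (1 - p + p * Real.exp t)) := by
        rw [Real.exp_log (hD t)]
    _ ≤ Real.exp (p * t + t ^ 2 / 8) := Real.exp_le_exp.mpr hlog


/-- Weissman et al.'s L1-deviation inequality: if `X₁, …, X_ℓ` are i.i.d.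
samples from a probability mass function `P` on a finite set of cardinality
`d ≥ 1`, and `P̂` is the empirical distribution, then for every `ε > 0`,
`ℙ(‖P − P̂‖₁ ≥ ε) ≤ 2^d · exp(−ℓ ε² / 2)`. -/
theorem weissman_l1_deviation
    {Ω : Type*} [MeasureSpace Ω] [IsProbabilityMeasure (ℙ : Measure Ω)]
    {𝒳 : Type*} [Fintype 𝒳] [DecidableEq 𝒳] [MeasurableSpace 𝒳]
    [MeasurableSingletonClass 𝒳]
    (d : ℕ) (hd : 1 ≤ d) (hcard : Fintype.card 𝒳 = d)
    (P : 𝒳 → ℝ) (hP0 : ∀ x, 0 ≤ P x) (hP1 : ∑ x, P x = 1)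
    (ℓ : ℕ) (hℓ : 1 ≤ ℓ) (X : Fin ℓ → Ω → 𝒳)
    (hmeas : ∀ j, Measurable (X j))
    (hindep : iIndepFun X ℙ)
    (hdist : ∀ j x, (ℙ {ω | X j ω = x}).toReal = P x)
    (ε : ℝ) (hε : 0 < ε) :
    (ℙ {ω | ε ≤ ∑ x, |P x -
        ((Finset.univ.filter (fun j => X j ω = x)).card : ℝ) / (ℓ : ℝ)|}).toReal
      ≤ 2 ^ d * Real.exp (-(ℓ : ℝ) * ε ^ 2 / 2) := by
  have hℓpos : (0 : ℝ) < ℓ := by exact_mod_cast hℓ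
  -- indicator variables for a subset A
  set Y : Finset 𝒳 → Fin ℓ → Ω → ℝ :=
    fun A j => (fun x => if x ∈ A then (1 : ℝ) else 0) ∘ X j with hY_def
  set pA : Finset 𝒳 → ℝ := fun A => ∑ x ∈ A, P x with hpA_def
  set E : Finset 𝒳 → Set Ω :=
    fun A => {ω | (ℓ : ℝ) * pA A + (ℓ : ℝ) * ε / 2 ≤ (∑ j, Y A j) ω} with hE_def
  have hpA0 : ∀ A, 0 ≤ pA A := fun A => Finset.sum_nonneg fun x _ => hP0 x
  have hpA1 : ∀ A, pA A ≤ 1 := by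
    intro A
    rw [← hP1]
    exact Finset.sum_le_sum_of_subset_of_nonneg (Finset.subset_univ A) fun x _ _ => hP0 x
  have hYmeas : ∀ A j, Measurable (Y A j) :=
    fun A j => (measurable_of_countable _).comp (hmeas j)
  have hYindep : ∀ A, iIndepFun (Y A) ℙ :=
    fun A => hindep.comp _ fun j => measurable_of_countable _
  -- probability of X j ∈ A
  have hsetmeas : ∀ (j) (A : Finset 𝒳), MeasurableSet {ω | X j ω ∈ A} := by
    intro j A
    have : {ω | X j ω ∈ A} = X j ⁻¹' (↑A) := rfl
    rw [this]
    exact hmeas j (A.finite_toSet.measurableSet)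
  have hprob : ∀ (j) (A : Finset 𝒳), (ℙ {ω | X j ω ∈ A}).toReal = pA A := by
    intro j A
    have hU : {ω | X j ω ∈ A} = ⋃ x ∈ A, {ω | X j ω = x} := by
      ext ω; simp
    rw [hU, measure_biUnion_finset]
    · rw [ENNReal.toReal_sum fun x _ => measure_ne_top _ _]
      exact Finset.sum_congr rfl fun x _ => hdist j x
    · intro x _ y _ hxy
      simp only [Function.onFun, Set.disjoint_left]
      intro ω h1 h2
      exact hxy (h1.symm.trans h2)
    · intro x _
      exact hmeas j (measurableSet_singleton x)
  -- rewrite exp (t * Y) as constant plus indicator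
  have hexpY : ∀ (A : Finset 𝒳) (j) (t : ℝ),
      (fun ω => Real.exp (t * Y A j ω)) =
        fun ω => 1 + Set.indicator {ω | X j ω ∈ A} (fun _ => Real.exp t - 1) ω := by
    intro A j t
    funext ω
    by_cases h : X j ω ∈ A
    · simp [hY_def, h, Set.indicator_of_mem, Set.mem_setOf_eq]
    · simp [hY_def, h, Set.indicator_of_notMem, Set.mem_setOf_eq]
  have hint : ∀ (A : Finset 𝒳) (j) (t : ℝ),
      Integrable (fun ω => Real.exp (t * Y A j ω)) ℙ := by
    intro A j t
    rw [hexpY A j t]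
    exact (integrable_const 1).add
      ((integrable_const (Real.exp t - 1)).indicator (hsetmeas j A))
  have hmgf : ∀ (A : Finset 𝒳) (j) (t : ℝ),
      mgf (Y A j) ℙ t = (1 - pA A) + pA A * Real.exp t := by
    intro A j t
    rw [mgf, hexpY A j t, integral_add (integrable_const 1)
      ((integrable_const (Real.exp t - 1)).indicator (hsetmeas j A)),
      integral_indicator_const _ (hsetmeas j A)]
    simp [← hprob j A, measureReal_def]
    ring
  -- Chernoff bound for each subset A
  have hchern : ∀ A : Finset 𝒳,
      (ℙ (E A)).toReal ≤ Real.exp (-(ℓ : ℝ) * ε ^ 2 / 2) := by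
    intro A
    set t : ℝ := 2 * ε with ht_def
    have ht : 0 ≤ t := by positivity
    have hIS : Integrable (fun ω => Real.exp (t * (∑ j, Y A j) ω)) ℙ :=
      (hYindep A).integrable_exp_mul_sum (hYmeas A) fun j _ => hint A j t
    have h1 := measure_ge_le_exp_mul_mgf ((ℓ : ℝ) * pA A + (ℓ : ℝ) * ε / 2) ht hIS
    have h2 : mgf (∑ j, Y A j) ℙ t ≤ Real.exp ((ℓ : ℝ) * (pA A * t + t ^ 2 / 8)) := by
      rw [(hYindep A).mgf_sum (hYmeas A)]
      calc ∏ j : Fin ℓ, mgf (Y A j) ℙ t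
          = ((1 - pA A) + pA A * Real.exp t) ^ ℓ := by
            rw [Finset.prod_congr rfl fun j _ => hmgf A j t]
            simp
        _ ≤ Real.exp (pA A * t + t ^ 2 / 8) ^ ℓ := by
            apply pow_le_pow_left₀
            · have := mul_nonneg (hpA0 A) (Real.exp_pos t).le
              linarith [hpA1 A]
            · exact hoeffding_bernoulli (pA A) (hpA0 A) (hpA1 A) t
        _ = Real.exp ((ℓ : ℝ) * (pA A * t + t ^ 2 / 8)) := by
            rw [← Real.exp_nat_mul]
    calc (ℙ (E A)).toReal
        ≤ Real.exp (-t * ((ℓ : ℝ) * pA A + (ℓ : ℝ) * ε / 2)) * mgf (∑ j, Y A j) ℙ t := h1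
      _ ≤ Real.exp (-t * ((ℓ : ℝ) * pA A + (ℓ : ℝ) * ε / 2)) *
            Real.exp ((ℓ : ℝ) * (pA A * t + t ^ 2 / 8)) := by
            exact mul_le_mul_of_nonneg_left h2 (Real.exp_pos _).le
      _ = Real.exp (-(ℓ : ℝ) * ε ^ 2 / 2) := by
            rw [← Real.exp_add]
            congr 1
            rw [ht_def]
            ring
  -- inclusion of the main event into the union of the E A
  have hincl : {ω | ε ≤ ∑ x, |P x -
        ((Finset.univ.filter (fun j => X j ω = x)).card : ℝ) / (ℓ : ℝ)|} ⊆
      ⋃ A : Finset 𝒳, E A := by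
    intro ω hω
    simp only [Set.mem_setOf_eq] at hω
    set Q : 𝒳 → ℝ :=
      fun x => ((Finset.univ.filter (fun j => X j ω = x)).card : ℝ) / (ℓ : ℝ) with hQ_def
    have hcnt : ∑ x : 𝒳, (Finset.univ.filter (fun j => X j ω = x)).card = ℓ := by
      have h := Finset.card_eq_sum_card_fiberwise
        (s := (Finset.univ : Finset (Fin ℓ))) (t := (Finset.univ : Finset 𝒳))
        (f := fun j => X j ω) (fun j _ => Finset.mem_univ _)
      simpa using h.symm
    have hQsum : ∑ x, Q x = 1 := by
      rw [hQ_def, ← Finset.sum_div, ← Nat.cast_sum, hcnt, div_self hℓpos.ne']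
    set A : Finset 𝒳 := Finset.univ.filter (fun x => P x ≤ Q x) with hA_def
    refine Set.mem_iUnion.mpr ⟨A, ?_⟩
    have hsplit : ∑ x, |P x - Q x| = 2 * ∑ x ∈ A, (Q x - P x) := by
      have h1 : ∑ x, |P x - Q x| =
          ∑ x ∈ A, (Q x - P x) + ∑ x ∈ Finset.univ \ A, (P x - Q x) := by
        rw [← Finset.sum_sdiff (Finset.subset_univ A) (f := fun x => |P x - Q x|)]
        rw [add_comm]
        congr 1
        · exact Finset.sum_congr rfl fun x hx => by
            simp only [hA_def, Finset.mem_filter] at hx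
            rw [abs_of_nonpos (by linarith [hx.2])]
            ring
        · exact Finset.sum_congr rfl fun x hx => by
            simp only [hA_def, Finset.mem_sdiff, Finset.mem_filter] at hx
            push_neg at hx
            rw [abs_of_pos (by linarith [hx.2 hx.1])]
      have h2 : ∑ x ∈ Finset.univ \ A, (P x - Q x) = ∑ x ∈ A, (Q x - P x) := by
        have h3 : ∑ x ∈ Finset.univ \ A, (P x - Q x) + ∑ x ∈ A, (P x - Q x) = 0 := by
          rw [Finset.sum_sdiff (Finset.subset_univ A)]
          rw [Finset.sum_sub_distrib, hP1, hQsum]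
          ring
        have h4 : ∑ x ∈ A, (Q x - P x) = - ∑ x ∈ A, (P x - Q x) := by
          rw [← Finset.sum_neg_distrib]
          exact Finset.sum_congr rfl fun x _ => by ring
        linarith
      rw [h1, h2]
      ring
    -- identify the sum of indicators with the count
    have hcount : (∑ j, Y A j) ω = ∑ x ∈ A, ((Finset.univ.filter
        (fun j => X j ω = x)).card : ℝ) := by
      rw [Finset.sum_apply]
      have h5 : ∀ j : Fin ℓ, Y A j ω = ∑ x ∈ A, (if X j ω = x then (1 : ℝ) else 0) := by
        intro j
        rw [Finset.sum_ite_eq A (X j ω) (fun _ => (1 : ℝ))]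
        rfl
      rw [Finset.sum_congr rfl fun j _ => h5 j, Finset.sum_comm]
      exact Finset.sum_congr rfl fun x _ => by
        rw [Finset.sum_boole]
    have hQA : ∑ x ∈ A, Q x = (∑ j, Y A j) ω / (ℓ : ℝ) := by
      rw [hcount, hQ_def, Finset.sum_div]
    rw [hsplit] at hω
    have hfinal : (ℓ : ℝ) * pA A + (ℓ : ℝ) * ε / 2 ≤ (∑ j, Y A j) ω := by
      have h6 : ∑ x ∈ A, (Q x - P x) = (∑ j, Y A j) ω / (ℓ : ℝ) - pA A := by
        rw [Finset.sum_sub_distrib, hQA, hpA_def]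
      rw [h6] at hω
      have h7 : (ℓ : ℝ) * ((∑ j, Y A j) ω / (ℓ : ℝ)) = (∑ j, Y A j) ω := by
        field_simp
      nlinarith
    exact hfinal
  -- union bound
  have hunion : ℙ {ω | ε ≤ ∑ x, |P x -
        ((Finset.univ.filter (fun j => X j ω = x)).card : ℝ) / (ℓ : ℝ)|} ≤
      ∑ A : Finset 𝒳, ℙ (E A) :=
    (measure_mono hincl).trans (measure_iUnion_fintype_le _ _)
  calc (ℙ {ω | ε ≤ ∑ x, |P x -
        ((Finset.univ.filter (fun j => X j ω = x)).card : ℝ) / (ℓ : ℝ)|}).toReal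
      ≤ (∑ A : Finset 𝒳, ℙ (E A)).toReal :=
        ENNReal.toReal_mono (by
          exact (ENNReal.sum_lt_top.mpr fun A _ => measure_lt_top _ _).ne) hunion
    _ = ∑ A : Finset 𝒳, (ℙ (E A)).toReal :=
        ENNReal.toReal_sum fun A _ => measure_ne_top _ _
    _ ≤ ∑ A : Finset 𝒳, Real.exp (-(ℓ : ℝ) * ε ^ 2 / 2) :=
        Finset.sum_le_sum fun A _ => hchern A
    _ = 2 ^ d * Real.exp (-(ℓ : ℝ) * ε ^ 2 / 2) := by
        rw [Finset.sum_const, Finset.card_univ, Fintype.card_finset, hcard]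
        simp [nsmul_eq_mul]
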